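/- Let d > 0, let f : (0,d) → (0,d) satisfy 0 < f(x) < x for all x ∈ (0,d), and let β > 0 be such that f^{∘k}(x) ≤ x·(1 + (k/2)·x^{β})^{−1/β} for all k ∈ ℕ and x ∈ (0,d). Let γ > β, C > 0, and let δ : (0,d) → ℝ satisfy |δ(x)| ≤ C·x^{γ} for all x ∈ (0,d). Then for every x ∈ (0,d) the series ∑_{k=0}^{∞} |δ(f^{∘k}(x))| converges, and the function h(x) := −∑_{k=0}^{∞} δ(f^{∘k}(x)) satisfies h(x) = O(x^{γ−β}) as x → 0⁺. -/

import Mathlib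

open Set Filter Real Topology

private lemma key_bern {q r : ℝ} (hq : 0 ≤ q) (hr : 1 ≤ r) :
    1 + q * (1 - 1/r) ≤ r ^ q := by
  have hr0 : 0 < r := lt_of_lt_of_le one_pos hr
  have hinv : Real.log (1/r) ≤ 1/r - 1 := Real.log_le_sub_one_of_pos (by positivity)
  have hli : Real.log (1/r) = - Real.log r := by rw [one_div, Real.log_inv]
  have hlog : 1 - 1/r ≤ Real.log r := by rw [hli] at hinv; linarith
  calc 1 + q * (1 - 1/r) ≤ 1 + q * Real.log r := by nlinarith
    _ ≤ Real.exp (q * Real.log r) := by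
        linarith [Real.add_one_le_exp (q * Real.log r)]
    _ = r ^ q := by rw [Real.rpow_def_of_pos hr0, mul_comm]

private lemma step_bound {t p : ℝ} (ht : 0 < t) (hp : 1 < p) {a : ℝ} (ha : 1 ≤ a) :
    (a + t/2) ^ (-p) ≤ 2/(t*(p-1)) * (a ^ (-(p-1)) - (a + t/2) ^ (-(p-1))) := by
  set q : ℝ := p - 1 with hqdef
  have hq : 0 < q := by simp [hqdef]; linarith
  have ha0 : 0 < a := lt_of_lt_of_le one_pos ha
  set b : ℝ := a + t/2 with hbdef
  have hb0 : 0 < b := by positivity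
  have hab : a ≤ b := by simp [hbdef]; positivity
  have hr : 1 ≤ b / a := (one_le_div ha0).mpr hab
  have hkey : 1 + q * (1 - 1/(b/a)) ≤ (b/a) ^ q := key_bern hq.le hr
  have hdiv : (b/a) ^ q = b ^ q / a ^ q := Real.div_rpow hb0.le ha0.le q
  have haq : 0 < a ^ q := Real.rpow_pos_of_pos ha0 q
  have hbq : 0 < b ^ q := Real.rpow_pos_of_pos hb0 q
  -- from hkey: a^(-q) ≥ b^(-q) + q*(b-a)*b^(-q)/b
  have h1 : 1/(b/a) = a/b := one_div_div b a
  have h2 : (1 + q * (1 - a/b)) * (a^q)⁻¹ * (b^q)⁻¹ * a^q ≤ (b^q/a^q) * (a^q)⁻¹ * (b^q)⁻¹ * a^q := by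
    have := hkey
    rw [h1, hdiv] at this
    have hnn : (0:ℝ) ≤ (a^q)⁻¹ * (b^q)⁻¹ * a^q := by positivity
    calc (1 + q * (1 - a/b)) * (a^q)⁻¹ * (b^q)⁻¹ * a^q
        = (1 + q * (1 - a/b)) * ((a^q)⁻¹ * (b^q)⁻¹ * a^q) := by ring
      _ ≤ (b^q/a^q) * ((a^q)⁻¹ * (b^q)⁻¹ * a^q) := by
          exact mul_le_mul_of_nonneg_right this hnn
      _ = (b^q/a^q) * (a^q)⁻¹ * (b^q)⁻¹ * a^q := by ring
  have h3 : (1 + q * (1 - a/b)) * (b^q)⁻¹ ≤ (a^q)⁻¹ := by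
    have e1 : (1 + q * (1 - a/b)) * (a^q)⁻¹ * (b^q)⁻¹ * a^q = (1 + q * (1 - a/b)) * (b^q)⁻¹ := by
      field_simp
    have e2 : (b^q/a^q) * (a^q)⁻¹ * (b^q)⁻¹ * a^q = (a^q)⁻¹ := by
      field_simp
    rw [e1, e2] at h2
    exact h2
  have hanq : a ^ (-q) = (a^q)⁻¹ := Real.rpow_neg ha0.le q
  have hbnq : b ^ (-q) = (b^q)⁻¹ := Real.rpow_neg hb0.le q
  have hbp : b ^ (-p) = (b^q)⁻¹ / b := by
    have : b ^ (-p) = b ^ (-q) * b ^ (-1 : ℝ) := by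
      rw [← Real.rpow_add hb0, hqdef]; congr 1; ring
    rw [this, hbnq, Real.rpow_neg_one]
    ring
  -- h3 : b^(-q) + q*(1 - a/b)*b^(-q) ≤ a^(-q)
  -- note 1 - a/b = (t/2)/b
  have hfrac : 1 - a/b = (t/2)/b := by
    field_simp [hbdef]; rw [hbdef]; ring
  have h4 : q * (t/2) * ((b^q)⁻¹ / b) ≤ (a^q)⁻¹ - (b^q)⁻¹ := by
    have expand : (1 + q * (1 - a/b)) * (b^q)⁻¹ = (b^q)⁻¹ + q * (t/2) * ((b^q)⁻¹ / b) := by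
      rw [hfrac]; field_simp
    rw [expand] at h3
    linarith
  show b ^ (-p) ≤ 2/(t*q) * (a ^ (-q) - b ^ (-q))
  rw [hbp, hanq, hbnq]
  have htq : 0 < t * q := by positivity
  have h5 := mul_le_mul_of_nonneg_left h4 (le_of_lt (show (0:ℝ) < 2/(t*q) by positivity))
  have e : 2/(t*q) * (q * (t/2) * ((b^q)⁻¹ / b)) = (b^q)⁻¹ / b := by
    field_simp
  rw [e] at h5
  linarith

private lemma partial_aux {t p : ℝ} (ht : 0 < t) (hp : 1 < p) (n : ℕ) :
    ∑ k ∈ Finset.range (n+1), (1 + (k/2 : ℝ) * t) ^ (-p)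
      ≤ 1 + 2/(t*(p-1)) * (1 - (1 + ((n:ℝ)/2) * t) ^ (-(p-1))) := by
  induction n with
  | zero => simp
  | succ n ih =>
    rw [Finset.sum_range_succ]
    have ha : (1:ℝ) ≤ 1 + ((n:ℝ)/2) * t := by
      have : (0:ℝ) ≤ ((n:ℝ)/2) * t := by positivity
      linarith
    have hstep := step_bound ht hp ha
    have heq : (1 + ((n:ℝ)/2) * t) + t/2 = 1 + (((n:ℕ)+1 : ℕ)/2 : ℝ) * t := by
      push_cast; ring
    rw [heq] at hstep
    linarith

private lemma partial_bound {t p : ℝ} (ht : 0 < t) (hp : 1 < p) (n : ℕ) :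
    ∑ k ∈ Finset.range n, (1 + (k/2 : ℝ) * t) ^ (-p) ≤ 1 + 2/(t*(p-1)) := by
  have hc : 0 ≤ 2/(t*(p-1)) := le_of_lt (div_pos two_pos (mul_pos ht (by linarith)))
  cases n with
  | zero => simp; linarith
  | succ n =>
    have h := partial_aux ht hp n
    have hv : 0 ≤ (1 + ((n:ℝ)/2) * t) ^ (-(p-1)) := by
      apply Real.rpow_nonneg
      positivity
    have : 2/(t*(p-1)) * (1 - (1 + ((n:ℝ)/2) * t) ^ (-(p-1))) ≤ 2/(t*(p-1)) := by
      nlinarith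
    linarith

set_option maxHeartbeats 1000000 in
/-- under the iterate estimate `f^[k] x ≤ x (1 + (k/2) x^β)^(−1/β)` and the
bound `|δ x| ≤ C x^γ` with `γ > β`, the series `∑ |δ(f^[k] x)|` converges on `(0,d)` and
`h(x) = −∑ δ(f^[k] x)` is `O(x^(γ−β))` as `x → 0⁺`. -/
theorem stmt1 (d : ℝ) (hd : 0 < d) (f : ℝ → ℝ)
    (hmaps : MapsTo f (Ioo 0 d) (Ioo 0 d))
    (hf : ∀ x ∈ Ioo 0 d, 0 < f x ∧ f x < x)
    (β : ℝ) (hβ : 0 < β)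
    (hiter : ∀ k : ℕ, ∀ x ∈ Ioo 0 d,
      f^[k] x ≤ x * (1 + (k / 2 : ℝ) * x ^ β) ^ (-(1 / β)))
    (γ : ℝ) (hγ : β < γ) (C : ℝ) (hC : 0 < C)
    (δ : ℝ → ℝ) (hδ : ∀ x ∈ Ioo 0 d, |δ x| ≤ C * x ^ γ) :
    (∀ x ∈ Ioo 0 d, Summable fun k : ℕ => |δ (f^[k] x)|) ∧
    ∃ M > (0 : ℝ), ∃ d' : ℝ, 0 < d' ∧ d' ≤ d ∧
      ∀ x ∈ Ioo 0 d', |-∑' k : ℕ, δ (f^[k] x)| ≤ M * x ^ (γ - β) := by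
  have hγ0 : 0 < γ := hβ.trans hγ
  have hp : 1 < γ/β := (one_lt_div hβ).mpr hγ
  have hq : 0 < γ/β - 1 := by linarith
  have hmem : ∀ x ∈ Ioo 0 d, ∀ k : ℕ, f^[k] x ∈ Ioo 0 d := fun x hx k => hmaps.iterate k hx
  have hterm : ∀ x ∈ Ioo 0 d, ∀ k : ℕ,
      |δ (f^[k] x)| ≤ C * x ^ γ * (1 + (k/2 : ℝ) * x ^ β) ^ (-(γ/β)) := by
    intro x hx k
    obtain ⟨hx0, hxd⟩ := hx
    have hk := hmem x ⟨hx0, hxd⟩ k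
    have hbase : (0:ℝ) < 1 + (k/2 : ℝ) * x ^ β := by positivity
    have h1 : |δ (f^[k] x)| ≤ C * (f^[k] x) ^ γ := hδ _ hk
    have h2 : (f^[k] x) ^ γ ≤ (x * (1 + (k/2 : ℝ) * x ^ β) ^ (-(1/β))) ^ γ :=
      Real.rpow_le_rpow hk.1.le (hiter k x ⟨hx0, hxd⟩) hγ0.le
    have h3 : (x * (1 + (k/2 : ℝ) * x ^ β) ^ (-(1/β))) ^ γ
        = x ^ γ * (1 + (k/2 : ℝ) * x ^ β) ^ (-(γ/β)) := by
      rw [Real.mul_rpow hx0.le (Real.rpow_nonneg hbase.le _),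
        ← Real.rpow_mul hbase.le]
      ring_nf
    rw [h3] at h2
    calc |δ (f^[k] x)| ≤ C * (f^[k] x) ^ γ := h1
      _ ≤ C * (x ^ γ * (1 + (k/2 : ℝ) * x ^ β) ^ (-(γ/β))) :=
          mul_le_mul_of_nonneg_left h2 hC.le
      _ = C * x ^ γ * (1 + (k/2 : ℝ) * x ^ β) ^ (-(γ/β)) := by ring
  have hpartial : ∀ x ∈ Ioo 0 d, ∀ n : ℕ,
      ∑ k ∈ Finset.range n, |δ (f^[k] x)| ≤ C * x ^ γ * (1 + 2/(x ^ β * (γ/β - 1))) := by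
    intro x hx n
    have ht : 0 < x ^ β := Real.rpow_pos_of_pos hx.1 β
    calc ∑ k ∈ Finset.range n, |δ (f^[k] x)|
        ≤ ∑ k ∈ Finset.range n, C * x ^ γ * (1 + (k/2 : ℝ) * x ^ β) ^ (-(γ/β)) :=
          Finset.sum_le_sum fun k _ => hterm x hx k
      _ = C * x ^ γ * ∑ k ∈ Finset.range n, (1 + (k/2 : ℝ) * x ^ β) ^ (-(γ/β)) := by
          rw [Finset.mul_sum]
      _ ≤ C * x ^ γ * (1 + 2/(x ^ β * (γ/β - 1))) := by
          exact mul_le_mul_of_nonneg_left (partial_bound ht hp n)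
            (mul_nonneg hC.le (Real.rpow_nonneg hx.1.le γ))
  have hsumm : ∀ x ∈ Ioo 0 d, Summable fun k : ℕ => |δ (f^[k] x)| := by
    intro x hx
    exact summable_of_sum_range_le (fun k => abs_nonneg _) (hpartial x hx)
  have hM : 0 < C * (1 + 2/(γ/β - 1)) := by
    have h2q : 0 < 2/(γ/β - 1) := div_pos two_pos hq
    exact mul_pos hC (by linarith)
  refine ⟨hsumm, C * (1 + 2/(γ/β - 1)), hM, min d 1, lt_min hd one_pos,
    min_le_left d 1, ?_⟩
  intro x hx
  obtain ⟨hx0, hxm⟩ := hx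
  have hxd : x < d := lt_of_lt_of_le hxm (min_le_left d 1)
  have hx1 : x ≤ 1 := le_of_lt (lt_of_lt_of_le hxm (min_le_right d 1))
  have hxIoo : x ∈ Ioo 0 d := ⟨hx0, hxd⟩
  have ht : 0 < x ^ β := Real.rpow_pos_of_pos hx0 β
  have hsx : Summable fun k : ℕ => ‖δ (f^[k] x)‖ := hsumm x hxIoo
  have habs : |∑' k : ℕ, δ (f^[k] x)| ≤ ∑' k : ℕ, |δ (f^[k] x)| :=
    norm_tsum_le_tsum_norm hsx
  have htsum : ∑' k : ℕ, |δ (f^[k] x)| ≤ C * x ^ γ * (1 + 2/(x ^ β * (γ/β - 1))) :=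
    tsum_le_of_sum_range_le (fun k => abs_nonneg _) (hpartial x hxIoo)
  rw [abs_neg]
  have hE : x ^ (γ - β) = x ^ γ / x ^ β := Real.rpow_sub hx0 γ β
  have hA : x ^ γ ≤ x ^ (γ - β) :=
    Real.rpow_le_rpow_of_exponent_ge hx0 hx1 (by linarith)
  have hE0 : 0 < x ^ (γ - β) := Real.rpow_pos_of_pos hx0 _
  have hAγ : 0 < x ^ γ := Real.rpow_pos_of_pos hx0 γ
  have hfinal : C * x ^ γ * (1 + 2/(x ^ β * (γ/β - 1)))
      ≤ C * (1 + 2/(γ/β - 1)) * x ^ (γ - β) := by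
    have hAE : x ^ γ = x ^ (γ - β) * x ^ β := by
      rw [hE]; field_simp
    have expand : C * x ^ γ * (1 + 2/(x ^ β * (γ/β - 1)))
        = C * x ^ γ + (2*C/(γ/β - 1)) * (x ^ γ / x ^ β) := by
      field_simp
    have expand2 : C * (1 + 2/(γ/β - 1)) * x ^ (γ - β)
        = C * x ^ (γ - β) + (2*C/(γ/β - 1)) * x ^ (γ - β) := by
      field_simp
    rw [expand, expand2, ← hE]
    have : C * x ^ γ ≤ C * x ^ (γ - β) := mul_le_mul_of_nonneg_left hA hC.le
    linarith
  linarith
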